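/- arXiv:1201.0171 — 9 statements merged into one kernel-verified Lean document; each statement's English description precedes it below -/
import Mathlib

section
/- (Alternating Property, even indices) For every k ≥ 1 and every i with 0 ≤ i ≤ d-1, SG(2dk - 2i) = SG(2dk), i.e. the even-indexed values within each block (2dk-2d, 2dk] are all equal. -/
/-- mex of the two-element set {a, b}: the least natural number not in {a, b}. -/
def mex2 (a b : ℕ) : ℕ :=
  if 0 ≠ a ∧ 0 ≠ b then 0 else if 1 ≠ a ∧ 1 ≠ b then 1 else if 2 ≠ a ∧ 2 ≠ b then 2 else 3

/-- The Sprague–Grundy sequence of the game G_{1,2d}: SG d 1 = 0 and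
    SG d n = mex {SG d (n-1), SG d ⌈n/(2d)⌉} for n ≥ 2. -/
def SG (d : ℕ) : ℕ → ℕ
  | 0 => 0
  | 1 => 0
  | n + 2 => mex2 (SG d (n + 1)) (SG d ((n + 2 + (2 * d - 1)) / (2 * d)))
decreasing_by
  · omega
  · rcases Nat.eq_zero_or_pos d with h | h
    · simp [h]
    · have h2 : 0 < 2 * d := by omega
      rw [Nat.div_lt_iff_lt_mul h2]
      simp only [Nat.succ_eq_add_one]
      have h6 : (n + 1 + 1) * 2 ≤ (n + 1 + 1) * (2 * d) := Nat.mul_le_mul_left _ (by omega)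
      have h8 : 2 * (2 * d) ≤ (n + 1 + 1) * (2 * d) := Nat.mul_le_mul_right _ (by omega)
      omega

lemma mex2_le (a b : ℕ) : mex2 a b ≤ 2 := by
  unfold mex2; split_ifs <;> omega

lemma mex2_ne_right (a b : ℕ) : mex2 a b ≠ b := by
  unfold mex2; split_ifs <;> omega

lemma mex2_period (a c : ℕ) (ha : a ≤ 2) (hc : c ≤ 2) (h : a ≠ c) :
    mex2 (mex2 a c) c = a := by
  interval_cases a <;> interval_cases c <;> simp_all <;> rfl

lemma SG_le (d n : ℕ) : SG d n ≤ 2 := by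
  match n with
  | 0 => simp [SG]
  | 1 => simp [SG]
  | n + 2 => rw [SG]; exact mex2_le _ _

/-- In-block recurrence: if 2d(k-1) < n ≤ 2dk (expressed subtraction-free) and n ≥ 2,
then SG d n = mex2 (SG d (n-1)) (SG d k). -/
lemma SG_in_block (d k n : ℕ) (hd : 1 ≤ d) (h1 : 2 * d * k < n + 2 * d)
    (h2 : n ≤ 2 * d * k) (hn : 2 ≤ n) :
    SG d n = mex2 (SG d (n - 1)) (SG d k) := by
  obtain ⟨m, rfl⟩ : ∃ m, n = m + 2 := ⟨n - 2, by omega⟩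
  have hdiv : (m + 2 + (2 * d - 1)) / (2 * d) = k := by
    have e1 : k * (2 * d) = 2 * d * k := by ring
    have e2 : (k + 1) * (2 * d) = 2 * d * k + 2 * d := by ring
    apply Nat.div_eq_of_lt_le
    · omega
    · omega
  rw [SG, hdiv]
  norm_num

lemma SG_step (d k m : ℕ) (hd : 1 ≤ d) (hk : 1 ≤ k)
    (h1 : 2 * d * k + 2 ≤ m + 2 * d) (h2 : m + 2 ≤ 2 * d * k) :
    SG d (m + 2) = SG d m := by
  have hdk : 2 * d ≤ 2 * d * k := Nat.le_mul_of_pos_right _ hk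
  have hm2 : 2 ≤ m := by omega
  have e0 : SG d m = mex2 (SG d (m - 1)) (SG d k) :=
    SG_in_block d k m hd (by omega) (by omega) hm2
  have e1 : SG d (m + 1) = mex2 (SG d m) (SG d k) := by
    have := SG_in_block d k (m + 1) hd (by omega) (by omega) (by omega)
    simpa using this
  have e2 : SG d (m + 2) = mex2 (SG d (m + 1)) (SG d k) := by
    have := SG_in_block d k (m + 2) hd (by omega) (by omega) (by omega)
    simpa using this
  rw [e2, e1]
  exact mex2_period _ _ (e0 ▸ mex2_le _ _) (SG_le d k) (e0 ▸ mex2_ne_right _ _)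

theorem stmt_1 (d : ℕ) (hd : 1 ≤ d) (k : ℕ) (hk : 1 ≤ k) (i : ℕ) (hi : i ≤ d - 1) :
    SG d (2 * d * k - 2 * i) = SG d (2 * d * k) := by
  induction i with
  | zero => simp
  | succ i ih =>
    have hdk : 2 * d ≤ 2 * d * k := Nat.le_mul_of_pos_right _ hk
    have hstep : SG d (2 * d * k - 2 * (i + 1) + 2) = SG d (2 * d * k - 2 * (i + 1)) :=
      SG_step d k _ hd hk (by omega) (by omega)
    have heq : 2 * d * k - 2 * (i + 1) + 2 = 2 * d * k - 2 * i := by omega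
    rw [heq] at hstep
    rw [← hstep]
    exact ih (by omega)
end

section
/- Within each block, odd- and even-indexed SG values differ: for every k ≥ 1, SG(2dk) ≠ SG(2dk - 1). -/
lemma mex2_ne_left (a b : ℕ) : mex2 a b ≠ a := by
  unfold mex2; split_ifs <;> omega

theorem stmt_3 (d : ℕ) (hd : 1 ≤ d) (k : ℕ) (hk : 1 ≤ k) :
    SG d (2 * d * k) ≠ SG d (2 * d * k - 1) := by
  have h2 : 2 ≤ 2 * d * k := by nlinarith
  obtain ⟨m, hm⟩ : ∃ m, 2 * d * k = m + 2 := ⟨2 * d * k - 2, by omega⟩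
  rw [hm, show m + 2 - 1 = m + 1 by omega, SG]
  exact mex2_ne_left _ _
end

section
/- If n ≥ 2 is even, then SG(n) ≠ 0. -/
lemma mex2_left_zero (b : ℕ) : mex2 0 b ≠ 0 := by
  unfold mex2; split_ifs <;> omega

lemma mex2_right_zero (a : ℕ) : mex2 a 0 ≠ 0 := by
  unfold mex2; split_ifs <;> omega

lemma mex2_eq_zero {a b : ℕ} (ha : a ≠ 0) (hb : b ≠ 0) : mex2 a b = 0 := by
  unfold mex2; split_ifs <;> omega

theorem stmt_4 (d : ℕ) (hd : 1 ≤ d) (n : ℕ) (hn : 2 ≤ n) (he : Even n) :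
    SG d n ≠ 0 := by
  induction n using Nat.strong_induction_on with
  | _ n ih =>
    obtain ⟨k, rfl⟩ : ∃ k, n = k + 2 := ⟨n - 2, by omega⟩
    have hk : Even k := by
      rcases he with ⟨r, hr⟩; exact ⟨r - 1, by omega⟩
    rcases Nat.eq_zero_or_pos k with rfl | hkpos
    · -- n = 2
      have h1 : (0 + 2 + (2 * d - 1)) / (2 * d) = 1 := by
        apply Nat.div_eq_of_lt_le <;> omega
      have h0 : SG d 1 = 0 := by simp [SG]
      rw [SG, h1]
      show mex2 (SG d 1) (SG d 1) ≠ 0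
      rw [h0]
      exact mex2_left_zero 0
    · -- k ≥ 2 since k even and k ≥ 1
      have hk2 : 2 ≤ k := by rcases hk with ⟨r, hr⟩; omega
      set m := (k + 2 + (2 * d - 1)) / (2 * d) with hm
      have hdvd : ¬ (2 * d ∣ k + 1 + (2 * d - 1) + 1) := by
        intro h
        have h2 : (2 : ℕ) ∣ 2 * d := ⟨d, rfl⟩
        have := h2.trans h
        rcases hk with ⟨r, hr⟩
        omega
      have hsame : (k + 1 + (2 * d - 1)) / (2 * d) = m := by
        have := Nat.succ_div (a := k + 1 + (2 * d - 1)) (b := 2 * d)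
        rw [if_neg hdvd] at this
        have he2 : k + 2 + (2 * d - 1) = (k + 1 + (2 * d - 1)) + 1 := by omega
        rw [hm, he2, this]
        omega
      rw [SG]
      show mex2 (SG d (k + 1)) (SG d m) ≠ 0
      by_cases hsm : SG d m = 0
      · rw [hsm]; exact mex2_right_zero _
      · have hk1 : SG d (k + 1) = 0 := by
          obtain ⟨j, rfl⟩ : ∃ j, k = j + 1 := ⟨k - 1, by omega⟩
          rw [show j + 1 + 1 = j + 2 from rfl, SG, hsame]
          exact mex2_eq_zero (ih (j + 1) (by omega) (by omega) hk) hsm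
        rw [hk1]; exact mex2_left_zero _
end

section
/- If n ≡ ℓ (mod 4d) for some odd ℓ with 2d+1 ≤ ℓ ≤ 4d-1, then SG(n) = 0. -/
lemma mex2_eq_zero_iff (a b : ℕ) : mex2 a b = 0 ↔ a ≠ 0 ∧ b ≠ 0 := by
  unfold mex2
  split_ifs with h1 h2 h3 <;> first | omega | (rw [false_iff]; omega)

lemma succ_div_of_odd (q m : ℕ) (hq : 1 ≤ q) (hodd : (m + 1) % 2 = 1) :
    (m + 1) / (2 * q) = m / (2 * q) := by
  rw [Nat.succ_div]
  have : ¬ (2 * q ∣ m + 1) := by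
    intro h
    obtain ⟨c, hc⟩ := (dvd_trans ⟨q, rfl⟩ h : 2 ∣ m + 1)
    omega
  simp [this]

lemma SG_even_ne_zero (d : ℕ) (hd : 1 ≤ d) :
    ∀ n, 2 ≤ n → n % 2 = 0 → SG d n ≠ 0 := by
  intro n
  induction n using Nat.strong_induction_on with
  | _ n ih =>
    intro h2 heven
    obtain ⟨m, rfl⟩ : ∃ m, n = m + 2 := ⟨n - 2, by omega⟩
    rw [SG]
    simp only [ne_eq, mex2_eq_zero_iff]
    push_neg
    intro ha
    rcases Nat.eq_zero_or_pos m with rfl | hm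
    · simp [SG] at ha
    · -- m ≥ 1, m even so m ≥ 2
      have hm2 : 2 ≤ m := by omega
      obtain ⟨m', rfl⟩ : ∃ m', m = m' + 2 := ⟨m - 2, by omega⟩
      have e : m' + 2 + 1 = m' + 1 + 2 := by omega
      rw [e, SG] at ha
      have hsplit : SG d (m' + 1 + 1) = 0 ∨
          SG d ((m' + 1 + 2 + (2 * d - 1)) / (2 * d)) = 0 := by
        by_contra hcon
        push_neg at hcon
        exact ha ((mex2_eq_zero_iff _ _).mpr ⟨hcon.1, hcon.2⟩)
      have hprev : SG d (m' + 1 + 1) ≠ 0 := by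
        have : m' + 1 + 1 = m' + 2 := by omega
        rw [this]
        exact ih (m' + 2) (by omega) (by omega) (by omega)
      have hc0 : SG d ((m' + 1 + 2 + (2 * d - 1)) / (2 * d)) = 0 :=
        hsplit.resolve_left hprev
      have hdiv : (m' + 2 + 2 + (2 * d - 1)) / (2 * d) =
          (m' + 1 + 2 + (2 * d - 1)) / (2 * d) := by
        have e1 : m' + 2 + 2 + (2 * d - 1) = (m' + 1 + 2 + (2 * d - 1)) + 1 := by omega
        rw [e1, succ_div_of_odd _ _ hd (by omega)]
      rw [hdiv, hc0]

theorem stmt_5 (d : ℕ) (hd : 1 ≤ d) (n : ℕ) (hn : 2 ≤ n) (ℓ : ℕ) (hodd : Odd ℓ)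
    (hl1 : 2 * d + 1 ≤ ℓ) (hl2 : ℓ ≤ 4 * d - 1) (hmod : n % (4 * d) = ℓ) :
    SG d n = 0 := by
  obtain ⟨t, ht⟩ := hodd
  have h4d : 0 < 4 * d := by omega
  have hkey : n = 4 * d * (n / (4 * d)) + ℓ := by
    conv_lhs => rw [← Nat.div_add_mod n (4 * d)]
    omega
  set k := n / (4 * d) with hk
  have hdvd : 2 ∣ 4 * d * k := ⟨2 * d * k, by ring⟩
  obtain ⟨c, hc⟩ := hdvd
  have hnodd : n % 2 = 1 := by omega
  have hn3 : 3 ≤ n := by omega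
  obtain ⟨m, rfl⟩ : ∃ m, n = m + 2 := ⟨n - 2, by omega⟩
  rw [SG, mex2_eq_zero_iff]
  constructor
  · exact SG_even_ne_zero d hd (m + 1) (by omega) (by omega)
  · have hdiv : (m + 2 + (2 * d - 1)) / (2 * d) = 2 * k + 2 := by
      have e : m + 2 + (2 * d - 1) = (ℓ + 2 * d - 1) + (2 * d) * (2 * k) := by
        have : 4 * d * k = (2 * d) * (2 * k) := by ring
        omega
      rw [e, Nat.add_mul_div_left _ _ (by omega : 0 < 2 * d)]
      have h2 : (ℓ + 2 * d - 1) / (2 * d) = 2 := by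
        apply Nat.div_eq_of_lt_le <;> omega
      omega
    rw [hdiv]
    exact SG_even_ne_zero d hd (2 * k + 2) (by omega) (by omega)
end

section
/- For d = 1 (the subtract-1-or-divide-by-2 game): SG(n) = 0 if and only if, writing the binary expansion of n with least significant digit first, either n ≡ 3 (mod 4), or the first digit of n is 1 and the maximal block of 0-digits immediately following that first 1 has even length and is followed by a 1. -/
namespace Stmt6Aux

lemma mex2_eq_zero_iff (a b : ℕ) : mex2 a b = 0 ↔ a ≠ 0 ∧ b ≠ 0 := by
  unfold mex2; split_ifs with h1 h2 h3
  · exact ⟨fun _ => ⟨h1.1.symm, h1.2.symm⟩, fun _ => rfl⟩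
  all_goals exact ⟨fun h => by simp at h,
    fun ⟨ha, hb⟩ => absurd ⟨fun h => ha h.symm, fun h => hb h.symm⟩ h1⟩

lemma SG_one : SG 1 1 = 0 := by rw [SG]

lemma SG_rec (n : ℕ) (hn : 2 ≤ n) : SG 1 n = mex2 (SG 1 (n - 1)) (SG 1 ((n + 1) / 2)) := by
  obtain ⟨m, rfl⟩ : ∃ m, n = m + 2 := ⟨n - 2, by omega⟩
  rw [SG]
  congr 2 <;> omega

/-- `V m j` means the 2-adic valuation of `m` is exactly `j`. -/
def V (m j : ℕ) : Prop := 2 ^ j ∣ m ∧ ¬ 2 ^ (j + 1) ∣ m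

lemma V_unique {m i j : ℕ} (hi : V m i) (hj : V m j) : i = j := by
  by_contra h
  rcases Nat.lt_or_ge i j with hlt | hge
  · exact hi.2 (dvd_trans (pow_dvd_pow 2 (by omega)) hj.1)
  · exact hj.2 (dvd_trans (pow_dvd_pow 2 (by omega)) hi.1)

lemma V_shift {m j : ℕ} (h : V m j) : V (2 * m) (j + 1) := by
  obtain ⟨t, rfl⟩ := h.1
  refine ⟨⟨t, by ring⟩, ?_⟩
  rintro ⟨s, hs⟩
  exact h.2 ⟨s, by nlinarith [hs, pow_succ 2 (j + 1), pow_succ 2 j]⟩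

lemma V_odd {m : ℕ} (h : m % 2 = 1) : V m 0 := by
  refine ⟨by simp, ?_⟩
  intro hd
  rw [pow_one] at hd
  omega

lemma V_exists : ∀ m, m ≠ 0 → ∃ j, V m j := by
  intro m
  induction m using Nat.strong_induction_on with
  | _ m ih =>
    intro hm
    rcases Nat.even_or_odd m with he | ho
    · rw [Nat.even_iff] at he
      obtain ⟨t, rfl⟩ : ∃ t, m = 2 * t := ⟨m / 2, by omega⟩
      obtain ⟨j, hj⟩ := ih t (by omega) (by omega)
      exact ⟨j + 1, V_shift hj⟩
    · exact ⟨0, V_odd (Nat.odd_iff.mp ho)⟩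

lemma digit_zero_of_dvd {m j : ℕ} (h : 2 ^ (j + 1) ∣ m) : m / 2 ^ j % 2 = 0 := by
  obtain ⟨t, rfl⟩ := h
  have h2 : 2 ^ (j + 1) * t = 2 ^ j * (2 * t) := by ring
  rw [h2, Nat.mul_div_cancel_left _ (by positivity : 0 < 2 ^ j)]
  omega

lemma digit_one {m j : ℕ} (hd : 2 ^ j ∣ m) (hnd : ¬ 2 ^ (j + 1) ∣ m) : m / 2 ^ j % 2 = 1 := by
  obtain ⟨t, rfl⟩ := hd
  rw [Nat.mul_div_cancel_left _ (by positivity : 0 < 2 ^ j)]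
  rcases Nat.even_or_odd t with he | ho
  · exfalso
    rw [Nat.even_iff] at he
    obtain ⟨s, rfl⟩ : ∃ s, t = 2 * s := ⟨t / 2, by omega⟩
    exact hnd ⟨s, by ring⟩
  · exact Nat.odd_iff.mp ho

lemma dvd_of_digits (m : ℕ) : ∀ j, (∀ i, i ≤ j → m / 2 ^ i % 2 = 0) → 2 ^ (j + 1) ∣ m := by
  intro j
  induction j with
  | zero =>
    intro h
    have h0 := h 0 le_rfl
    simp at h0
    have h2 : (2:ℕ) ^ (0 + 1) = 2 := by norm_num
    rw [h2]
    omega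
  | succ j ih =>
    intro h
    obtain ⟨t, rfl⟩ := ih (fun i hi => h i (le_trans hi (Nat.le_succ j)))
    have hd := h (j + 1) le_rfl
    rw [Nat.mul_div_cancel_left _ (by positivity : 0 < 2 ^ (j + 1))] at hd
    have ht : t = 2 * (t / 2) := by omega
    exact ⟨t / 2, by calc 2 ^ (j + 1) * t = 2 ^ (j + 1) * (2 * (t / 2)) := by rw [← ht]
      _ = 2 ^ (j + 1 + 1) * (t / 2) := by ring⟩

lemma digit_shift {n : ℕ} (j : ℕ) (hj : 1 ≤ j) (hn : n % 2 = 1) : n / 2 ^ j = (n - 1) / 2 ^ j := by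
  have h1 : ¬ 2 ^ j ∣ (n - 1 + 1) := by
    rw [Nat.sub_add_cancel (by omega)]
    intro hd
    have : 2 ∣ n := dvd_trans (dvd_pow_self 2 (by omega)) hd
    omega
  have h2 := Nat.succ_div_of_not_dvd h1
  rw [Nat.sub_add_cancel (by omega)] at h2
  exact h2

lemma key : ∀ n, 2 ≤ n → (SG 1 n = 0 ↔ (n % 2 = 1 ∧ ∃ j, Odd j ∧ V (n - 1) j)) := by
  intro n
  induction n using Nat.strong_induction_on with
  | _ n ih =>
    intro hn
    rcases Nat.even_or_odd n with he | ho
    · -- n even; SG value is nonzero, RHS is false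
      rw [Nat.even_iff] at he
      obtain ⟨m, rfl⟩ : ∃ m, n = 2 * m := ⟨n / 2, by omega⟩
      have hm : 1 ≤ m := by omega
      rw [SG_rec _ hn, show (2 * m + 1) / 2 = m from by omega, mex2_eq_zero_iff]
      constructor
      · rintro ⟨h1, h2⟩
        exfalso
        rcases Nat.lt_or_ge m 2 with hm1 | hm2
        · -- m = 1
          have : m = 1 := by omega
          subst this
          exact h2 SG_one
        · rcases Nat.even_or_odd m with hme | hmo
          · -- m even: SG (2m-1) = 0 with valuation 1
            rw [Nat.even_iff] at hme
            apply h1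
            rw [ih (2 * m - 1) (by omega) (by omega)]
            refine ⟨by omega, 1, odd_one, ?_, ?_⟩
            · rw [pow_one]; omega
            · intro hd
              rw [show (2:ℕ) ^ (1 + 1) = 4 from by norm_num] at hd
              obtain ⟨s, hs⟩ := hd
              obtain ⟨u, rfl⟩ : ∃ u, m = 2 * u := ⟨m / 2, by omega⟩
              omega
          · -- m odd, m ≥ 3
            rw [Nat.odd_iff] at hmo
            obtain ⟨j, hj⟩ := V_exists (m - 1) (by omega)
            have hj1 : 1 ≤ j := by
              by_contra hc
              have : j = 0 := by omega
              subst this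
              exact hj.2 (by rw [pow_one]; omega)
            rcases Nat.even_or_odd j with hje | hjo
            · apply h1
              rw [ih (2 * m - 1) (by omega) (by omega)]
              refine ⟨by omega, j + 1, ?_, ?_⟩
              · rw [Nat.odd_iff]; rw [Nat.even_iff] at hje; omega
              · have := V_shift hj
                rwa [show 2 * (m - 1) = 2 * m - 1 - 1 from by omega] at this
            · apply h2
              rw [ih m (by omega) (by omega)]
              exact ⟨hmo, j, hjo, hj⟩
      · rintro ⟨h1, _⟩
        omega
    · -- n odd, n = 2m+1 with m ≥ 1
      rw [Nat.odd_iff] at ho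
      obtain ⟨m, rfl⟩ : ∃ m, n = 2 * m + 1 := ⟨n / 2, by omega⟩
      have hm : 1 ≤ m := by omega
      have h2m : SG 1 (2 * m) ≠ 0 := by
        rw [ne_eq, ih (2 * m) (by omega) (by omega)]
        rintro ⟨h, _⟩
        omega
      rw [SG_rec _ hn, show (2 * m + 1 + 1) / 2 = m + 1 from by omega,
        show 2 * m + 1 - 1 = 2 * m from by omega, mex2_eq_zero_iff]
      have hQ : SG 1 (m + 1) = 0 ↔ ((m + 1) % 2 = 1 ∧ ∃ j, Odd j ∧ V m j) := by
        have := ih (m + 1) (by omega) (by omega)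
        rwa [show m + 1 - 1 = m from by omega] at this
      rcases Nat.even_or_odd m with hme | hmo
      · -- m even, so m ≥ 2
        rw [Nat.even_iff] at hme
        have hm2 : 2 ≤ m := by omega
        obtain ⟨j0, hj0⟩ := V_exists m (by omega)
        have hV2 : V (2 * m) (j0 + 1) := V_shift hj0
        constructor
        · rintro ⟨_, hne1⟩
          refine ⟨by omega, j0 + 1, ?_, hV2⟩
          rw [Nat.odd_iff]
          by_contra hc
          apply hne1
          rw [hQ]
          refine ⟨by omega, j0, ?_, hj0⟩
          rw [Nat.odd_iff]; omega
        · rintro ⟨_, j, hjo, hjV⟩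
          have hj : j = j0 + 1 := V_unique hjV hV2
          subst hj
          refine ⟨h2m, ?_⟩
          rw [ne_eq, hQ]
          rintro ⟨_, j', hj'o, hj'V⟩
          have : j' = j0 := V_unique hj'V hj0
          subst this
          rw [Nat.odd_iff] at hjo hj'o
          omega
      · -- m odd: SG (m+1) ≠ 0 (m+1 even), and valuation of 2m is 1
        rw [Nat.odd_iff] at hmo
        have hne1 : SG 1 (m + 1) ≠ 0 := by
          rw [ne_eq, hQ]
          rintro ⟨h, _⟩
          omega
        constructor
        · rintro ⟨_, _⟩
          refine ⟨by omega, 1, odd_one, ?_, ?_⟩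
          · rw [pow_one]; omega
          · intro hd
            rw [show (2:ℕ) ^ (1 + 1) = 4 from by norm_num] at hd
            obtain ⟨s, hs⟩ := hd
            omega
        · intro _
          exact ⟨h2m, hne1⟩

end Stmt6Aux

open Stmt6Aux in
/-- For d = 1: SG(n) = 0 iff n ≡ 3 (mod 4), or (reading binary digits of n least
significant first) the first digit is 1, and the maximal block of 0-digits immediately
following it has even length k (the digits at positions 1,…,k are 0) and is followed by
a 1 (the digit at position k+1 is 1). -/
theorem stmt_6 (n : ℕ) (hn : 2 ≤ n) :
    SG 1 n = 0 ↔
      (n % 4 = 3 ∨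
        (n % 2 = 1 ∧ ∃ k : ℕ, Even k ∧ (∀ j, 1 ≤ j → j ≤ k → n / 2 ^ j % 2 = 0) ∧
          n / 2 ^ (k + 1) % 2 = 1)) := by
  rw [key n hn]
  constructor
  · rintro ⟨h1, j, hodd, hV⟩
    have hj1 : 1 ≤ j := by
      rcases hodd with ⟨t, ht⟩; omega
    right
    refine ⟨h1, j - 1, ?_, ?_, ?_⟩
    · rw [Nat.even_iff]
      rw [Nat.odd_iff] at hodd
      omega
    · intro i hi1 hi2
      rw [digit_shift i hi1 h1]
      exact digit_zero_of_dvd (dvd_trans (pow_dvd_pow 2 (by omega)) hV.1)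
    · rw [show j - 1 + 1 = j from by omega, digit_shift j hj1 h1]
      exact digit_one hV.1 hV.2
  · rintro (h4 | ⟨h1, k, hk, hz, ho⟩)
    · refine ⟨by omega, 1, odd_one, ?_, ?_⟩
      · rw [pow_one]; omega
      · intro hd
        rw [show (2:ℕ) ^ (1 + 1) = 4 from by norm_num] at hd
        omega
    · refine ⟨h1, k + 1, ?_, ?_, ?_⟩
      · rw [Nat.odd_iff]
        rw [Nat.even_iff] at hk
        omega
      · apply dvd_of_digits
        intro i hi
        rcases Nat.eq_zero_or_pos i with h0 | h0
        · subst h0; simp; omega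
        · rw [← digit_shift i h0 h1]
          exact hz i h0 hi
      · intro hd
        have := digit_zero_of_dvd hd
        rw [← digit_shift (k + 1) (by omega) h1] at this
        omega
end

section
/- For n ≥ 2 with n ≡ ℓ (mod 4d) where ℓ is odd and 1 ≤ ℓ ≤ 2d-1: SG(n) = 0 if and only if SG(⌈n/(2d)⌉) ≠ 0. -/
lemma SG_step_s7 (d n : ℕ) :
    SG d (n + 2) = mex2 (SG d (n + 1)) (SG d ((n + 2 + (2 * d - 1)) / (2 * d))) := by
  rw [SG]

lemma sg_even_ne (d : ℕ) (hd : 1 ≤ d) : ∀ m, 2 ≤ m → m % 2 = 0 → SG d m ≠ 0 := by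
  intro m
  induction m using Nat.strong_induction_on with
  | _ m ih =>
    intro h2 hev
    obtain ⟨k, rfl⟩ : ∃ k, m = k + 2 := ⟨m - 2, by omega⟩
    rw [SG_step_s7]
    rcases Nat.eq_zero_or_pos k with hk | hk
    · subst hk
      have hq : (0 + 2 + (2 * d - 1)) / (2 * d) = 1 := by
        rw [Nat.div_eq_of_lt_le] <;> omega
      rw [hq]
      show mex2 (SG d 1) (SG d 1) ≠ 0
      rw [SG]
      rw [ne_eq, mex2_eq_zero_iff]
      simp
    · obtain ⟨j, rfl⟩ : ∃ j, k = j + 2 := ⟨k - 2, by omega⟩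
      rw [ne_eq, mex2_eq_zero_iff]
      rintro ⟨ha, hb⟩
      have hj : SG d (j + 2) ≠ 0 := ih (j + 2) (by omega) (by omega) (by omega)
      have hq' : SG d ((j + 3 + (2 * d - 1)) / (2 * d)) = 0 := by
        by_contra h
        apply ha
        show SG d (j + 1 + 2) = 0
        rw [SG_step_s7, mex2_eq_zero_iff]
        exact ⟨hj, h⟩
      have hne : ¬ (2 * d) ∣ (j + 3 + (2 * d - 1) + 1) := by
        intro hdvd
        have h2 : (2 : ℕ) ∣ (j + 3 + (2 * d - 1) + 1) := dvd_trans ⟨d, rfl⟩ hdvd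
        omega
      have heq : (j + 2 + 2 + (2 * d - 1)) / (2 * d) = (j + 3 + (2 * d - 1)) / (2 * d) := by
        have : j + 2 + 2 + (2 * d - 1) = j + 3 + (2 * d - 1) + 1 := by omega
        rw [this, Nat.succ_div_of_not_dvd hne]
      rw [heq, hq'] at hb
      exact hb rfl

theorem stmt_7 (d : ℕ) (hd : 1 ≤ d) (n : ℕ) (hn : 2 ≤ n) (ℓ : ℕ) (hodd : Odd ℓ)
    (hl1 : 1 ≤ ℓ) (hl2 : ℓ ≤ 2 * d - 1) (hmod : n % (4 * d) = ℓ) :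
    SG d n = 0 ↔ SG d ((n + (2 * d - 1)) / (2 * d)) ≠ 0 := by
  have hmm : n % (4 * d) % 2 = n % 2 := Nat.mod_mod_of_dvd n (by omega)
  obtain ⟨t, rfl⟩ := hodd
  have hodd' : n % 2 = 1 := by omega
  obtain ⟨k, rfl⟩ : ∃ k, n = k + 2 := ⟨n - 2, by omega⟩
  rw [SG_step_s7]
  have h1 : SG d (k + 1) ≠ 0 := sg_even_ne d hd (k + 1) (by omega) (by omega)
  rw [ne_eq, mex2_eq_zero_iff]
  constructor
  · rintro ⟨-, h⟩; exact h
  · intro h; exact ⟨h1, h⟩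
end

section
/- (Reduction 2) Let d ≥ 1. For any m ≥ 0, even c₁, c₂ and odd c₃ with 0 ≤ cᵢ ≤ 2d-1, writing n = 1 + 2d·c₁ + (2d)²·c₂ + (2d)³·c₃ + (2d)⁴·m, one has SG(n) = 0. -/
lemma SG_one (d : ℕ) : SG d 1 = 0 := by simp [SG]

lemma SG_rec (d x : ℕ) (hd : 1 ≤ d) (hx : 1 ≤ x) :
    SG d (x + 1) = mex2 (SG d x) (SG d (x / (2 * d) + 1)) := by
  obtain ⟨n, rfl⟩ : ∃ n, x = n + 1 := ⟨x - 1, by omega⟩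
  rw [show n + 1 + 1 = n + 2 from rfl, SG]
  congr 1
  have h : n + 2 + (2 * d - 1) = (n + 1) + 2 * d := by omega
  rw [h, Nat.add_div_right _ (by omega : 0 < 2 * d)]

lemma md_mod (D q r : ℕ) (hD : 0 < D) (hr : r < D) : (D * q + r) % D = r := by
  rw [Nat.mul_add_mod, Nat.mod_eq_of_lt hr]

lemma md_div (D q r : ℕ) (hD : 0 < D) (hr : r < D) : (D * q + r) / D = q := by
  rw [Nat.mul_add_div hD, Nat.div_eq_of_lt hr]; omega

lemma SG_key (d : ℕ) (hd : 1 ≤ d) : ∀ x : ℕ,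
    (SG d (x + 1) = 0 ↔ x = 0 ∨ (x % (2 * d) % 2 = 0 ∧ SG d (x / (2 * d) + 1) ≠ 0)) := by
  intro x
  induction x using Nat.strong_induction_on with
  | _ x ih =>
    match x, ih with
    | 0, _ => simp [SG_one]
    | (y + 1), ih =>
      have hD : 0 < 2 * d := by omega
      rw [SG_rec d (y + 1) hd (by omega), mex2_eq_zero_iff]
      obtain ⟨q, r, hqr, hr⟩ : ∃ q r, y + 1 = 2 * d * q + r ∧ r < 2 * d :=
        ⟨(y + 1) / (2 * d), (y + 1) % (2 * d), (Nat.div_add_mod (y + 1) (2 * d)).symm,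
          Nat.mod_lt _ hD⟩
      have hmod : (y + 1) % (2 * d) = r := by rw [hqr]; exact md_mod _ _ _ hD hr
      have hdiv : (y + 1) / (2 * d) = q := by rw [hqr]; exact md_div _ _ _ hD hr
      rw [hmod, hdiv]
      have ihy := ih y (by omega)
      rcases Nat.eq_zero_or_pos r with hr0 | hr1
      · -- r = 0, so y + 1 = 2d * q with q ≥ 1
        subst hr0
        have hq1 : 1 ≤ q := by
          rcases Nat.eq_zero_or_pos q with h | h
          · subst h; simp at hqr
          · exact h
        obtain ⟨q', rfl⟩ : ∃ q', q = q' + 1 := ⟨q - 1, by omega⟩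
        have h5 : 2 * d * (q' + 1) = 2 * d * q' + 2 * d := by ring
        rw [h5] at hqr
        have hy : y = 2 * d * q' + (2 * d - 1) := by omega
        have hymod : y % (2 * d) = 2 * d - 1 := by
          rw [hy]; exact md_mod _ _ _ hD (by omega)
        have hy1 : 2 * d - 1 ≤ y := hy ▸ Nat.le_add_left _ _
        have hSGy : SG d (y + 1) ≠ 0 := by
          intro h
          rcases ihy.mp h with h | ⟨hp, _⟩
          · omega
          · rw [hymod] at hp; omega
        have t2 : y + 1 ≠ 0 := by omega
        have t1 : (0 : ℕ) % 2 = 0 := rfl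
        tauto
      · -- r ≥ 1, y = 2d*q + (r-1)
        have hy : y = 2 * d * q + (r - 1) := by omega
        have hymod : y % (2 * d) = r - 1 := by rw [hy]; exact md_mod _ _ _ hD (by omega)
        have hydiv : y / (2 * d) = q := by rw [hy]; exact md_div _ _ _ hD (by omega)
        rw [hymod, hydiv] at ihy
        rcases Nat.eq_zero_or_pos y with hy0 | hy1
        · -- y = 0, x = 1, q = 0, r = 1
          subst hy0
          have hq0 : q = 0 := by
            rcases Nat.eq_zero_or_pos q with h | h
            · exact h
            · exfalso; have : 2 * d * 1 ≤ 2 * d * q := Nat.mul_le_mul_left _ h; omega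
          subst hq0
          have hr1' : r = 1 := by omega
          subst hr1'
          simp [SG_one]
        · have hy0 : y ≠ 0 := by omega
          have hpar : ((r - 1) % 2 = 0 ↔ ¬ r % 2 = 0) := by omega
          have t2 : y + 1 ≠ 0 := by omega
          by_cases hB : SG d (q + 1) = 0
          · simp [hB, t2]
          · constructor
            · rintro ⟨hA, _⟩
              right
              refine ⟨?_, hB⟩
              have := fun h => hA (ihy.mpr (Or.inr ⟨h, hB⟩))
              omega
            · rintro (h | ⟨hp, _⟩)
              · omega
              · refine ⟨?_, hB⟩
                intro h
                rcases ihy.mp h with h' | ⟨hp', _⟩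
                · exact hy0 h'
                · omega

theorem stmt_10 (d : ℕ) (hd : 1 ≤ d) (c₁ c₂ c₃ m : ℕ)
    (h1 : Even c₁) (h2 : Even c₂) (h3 : Odd c₃)
    (b1 : c₁ ≤ 2 * d - 1) (b2 : c₂ ≤ 2 * d - 1) (b3 : c₃ ≤ 2 * d - 1) :
    SG d (1 + 2 * d * c₁ + (2 * d) ^ 2 * c₂ + (2 * d) ^ 3 * c₃ + (2 * d) ^ 4 * m)
      = 0 := by
  have hD : 0 < 2 * d := by omega
  obtain ⟨a1, ha1⟩ := h1
  obtain ⟨a2, ha2⟩ := h2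
  obtain ⟨a3, ha3⟩ := h3
  have hc3 : 1 ≤ c₃ := by omega
  have key := SG_key d hd
  -- level 3
  have s3 : SG d ((2 * d * m + c₃) + 1) ≠ 0 := by
    intro h
    rcases (key _).mp h with h' | ⟨hp, _⟩
    · have : 2 * d * m + c₃ ≠ 0 := by omega
      exact this h'
    · rw [md_mod _ _ _ hD (by omega)] at hp
      omega
  -- level 2
  have s2 : SG d ((2 * d * (2 * d * m + c₃) + c₂) + 1) = 0 := by
    rw [key]
    right
    rw [md_mod _ _ _ hD (by omega), md_div _ _ _ hD (by omega)]
    exact ⟨by omega, s3⟩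
  -- level 1
  have s1 : SG d ((2 * d * (2 * d * (2 * d * m + c₃) + c₂) + c₁) + 1) ≠ 0 := by
    intro h
    rcases (key _).mp h with h' | ⟨_, hB⟩
    · rcases Nat.add_eq_zero.mp h' with ⟨hz, _⟩
      rcases Nat.mul_eq_zero.mp hz with h'' | h''
      · omega
      · rcases Nat.add_eq_zero.mp h'' with ⟨hz2, _⟩
        rcases Nat.mul_eq_zero.mp hz2 with h3 | h3 <;> omega
    · rw [md_div _ _ _ hD (by omega)] at hB
      exact hB s2
  -- level 0
  have hn : 1 + 2 * d * c₁ + (2 * d) ^ 2 * c₂ + (2 * d) ^ 3 * c₃ + (2 * d) ^ 4 * m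
      = 2 * d * (2 * d * (2 * d * (2 * d * m + c₃) + c₂) + c₁) + 1 := by ring
  rw [hn, key]
  right
  rw [Nat.mul_mod_right, Nat.mul_div_cancel_left _ hD]
  exact ⟨by omega, s1⟩
end

section
/- (Persistence of holding) Let a, b ≥ 1 and g = gcd(a, b), and define SG by the game G_{a,b}: SG(n) = mex{SG(n-a) [if n > a], SG(⌈n/b⌉) [if ⌈n/b⌉ < n]} with terminal positions having SG value 0. If for some m with mg > a all values SG(mg), SG(mg-1), ..., SG(mg-g+1) are equal, then for every j ≥ 0, the values SG(mg + ja), SG(mg + ja - 1), ..., SG(mg + ja - g + 1) are all equal. -/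
/-- mex of a finite set of naturals: the least natural number not in the set. -/
noncomputable def fmex (s : Finset ℕ) : ℕ := sInf {k : ℕ | k ∉ s}

/-- The positions reachable in one move of the game G_{a,b} from position n:
    n - a (if n > a, i.e. n - a ≥ 1), and ⌈n/b⌉ (if ⌈n/b⌉ ≠ n). -/
def moves (a b n : ℕ) : Finset ℕ :=
  (if a < n then ({n - a} : Finset ℕ) else ∅) ∪
    (if (n + b - 1) / b ≠ n then ({(n + b - 1) / b} : Finset ℕ) else ∅)

lemma ceil_lt (b n : ℕ) (hb : 2 ≤ b) (hn : 2 ≤ n) : (n + b - 1) / b < n := by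
  rw [Nat.div_lt_iff_lt_mul (by omega)]
  obtain ⟨b', rfl⟩ : ∃ b', b = b' + 2 := ⟨b - 2, by omega⟩
  obtain ⟨n', rfl⟩ : ∃ n', n = n' + 2 := ⟨n - 2, by omega⟩
  have h : (n' + 2) * (b' + 2) = n' * b' + 2 * n' + 2 * b' + 4 := by ring
  omega

lemma ceil_shift (b g n i : ℕ) (hb : 0 < b) (hgb : g ∣ b) (hgn : g ∣ n)
    (hi : i < g) (hn : 0 < n) :
    (n - i + b - 1) / b = (n + b - 1) / b := by
  obtain ⟨q', hq'⟩ : ∃ q', (n + b - 1) / b = q' + 1 := by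
    have h : 1 ≤ (n + b - 1) / b := (Nat.one_le_div_iff hb).2 (by omega)
    exact ⟨(n + b - 1) / b - 1, by omega⟩
  rw [hq']
  have hmod := Nat.div_add_mod (n + b - 1) b
  rw [hq'] at hmod
  obtain ⟨r, hr1, hr2⟩ : ∃ r, r < b ∧ b * (q' + 1) + r = n + b - 1 :=
    ⟨_, Nat.mod_lt _ hb, hmod⟩
  have hexp : b * (q' + 1) = b * q' + b := by ring
  rw [hexp] at hr2
  have hn1 : b * q' + 1 ≤ n := by omega
  have hdvd : g ∣ n - b * q' := Nat.dvd_sub hgn (hgb.mul_right q')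
  have hge : g ≤ n - b * q' := Nat.le_of_dvd (by omega) hdvd
  have g1 : (q' + 1) * b = b * q' + b := by ring
  have g2 : (q' + 1 + 1) * b = b * q' + 2 * b := by ring
  apply Nat.div_eq_of_lt_le
  · rw [g1]
    generalize hP : b * q' = P at hr2 hge
    omega
  · rw [g2]
    generalize hP : b * q' = P at hr2 hge
    omega

lemma step_lemma (a b g : ℕ) (ha : 1 ≤ a) (hb : 1 ≤ b) (hg : 1 ≤ g)
    (hgb : g ∣ b) (S : ℕ → ℕ)
    (hS : ∀ n, 1 ≤ n → S n = fmex ((moves a b n).image S))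
    (N : ℕ) (hgN : g ∣ N) (hge : a + g ≤ N)
    (hprev : ∀ i, i ≤ g - 1 → S (N - a - i) = S (N - a)) :
    ∀ i, i ≤ g - 1 → S (N - i) = S N := by
  intro i hi
  have hiN : i < g := by omega
  have haNi : a < N - i := by omega
  have h2Ni : 2 ≤ N - i := by omega
  have himg : (moves a b (N - i)).image S = (moves a b N).image S := by
    unfold moves
    rw [if_pos haNi, if_pos (show a < N by omega)]
    rw [Finset.image_union, Finset.image_union]
    have hsub : S (N - i - a) = S (N - a) := by
      have h : N - i - a = N - a - i := by omega
      rw [h]; exact hprev i hi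
    congr 1
    · rw [Finset.image_singleton, Finset.image_singleton, hsub]
    · by_cases hb2 : 2 ≤ b
      · have hc1 : (N - i + b - 1) / b = (N + b - 1) / b :=
          ceil_shift b g N i (by omega) hgb hgN hiN (by omega)
        rw [if_pos (Nat.ne_of_lt (ceil_lt b (N - i) hb2 h2Ni)),
          if_pos (Nat.ne_of_lt (ceil_lt b N hb2 (by omega)))]
        rw [Finset.image_singleton, Finset.image_singleton, hc1]
      · have hb1 : b = 1 := by omega
        subst hb1
        simp
  rw [hS (N - i) (by omega), hS N (by omega), himg]

/-- Persistence of holding in G_{a,b}. -/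
theorem stmt_15 (a b : ℕ) (ha : 1 ≤ a) (hb : 1 ≤ b) (S : ℕ → ℕ)
    (hS : ∀ n, 1 ≤ n → S n = fmex ((moves a b n).image S))
    (m : ℕ) (hm : a < m * Nat.gcd a b)
    (hhold : ∀ i, i ≤ Nat.gcd a b - 1 → S (m * Nat.gcd a b - i) = S (m * Nat.gcd a b)) :
    ∀ j : ℕ, ∀ i, i ≤ Nat.gcd a b - 1 →
      S (m * Nat.gcd a b + j * a - i) = S (m * Nat.gcd a b + j * a) := by
  intro j
  induction j with
  | zero =>
    intro i hi
    simpa using hhold i hi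
  | succ j ih =>
    set g := Nat.gcd a b with hgdef
    have hga : g ∣ a := Nat.gcd_dvd_left a b
    have hgb : g ∣ b := Nat.gcd_dvd_right a b
    have hg : 1 ≤ g := Nat.gcd_pos_of_pos_left b ha
    have hgle : g ≤ a := Nat.le_of_dvd ha hga
    have heq : m * g + (j + 1) * a = (m * g + j * a) + a := by ring
    have hgN : g ∣ m * g + (j + 1) * a :=
      dvd_add (dvd_mul_left g m) (hga.mul_left (j + 1))
    have hge : a + g ≤ m * g + (j + 1) * a := by
      have h3 : m * g ≤ m * g + j * a := Nat.le_add_right _ _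
      rw [heq]; linarith [hm]
    have hprev : ∀ i, i ≤ g - 1 →
        S (m * g + (j + 1) * a - a - i) = S (m * g + (j + 1) * a - a) := by
      intro i hi
      have h4 : m * g + (j + 1) * a - a = m * g + j * a := by rw [heq]; simp
      rw [h4]
      exact ih i hi
    exact step_lemma a b g ha hb hg hgb S hS _ hgN hge hprev
end

section
/- In the game G_{1,2d} with arbitrarily modified initial segment: if the first N-1 values are arbitrary elements of {0,1,2} and x_n = mex{x_{n-1}, x_{⌈n/(2d)⌉}} for n ≥ N, then for all n ≥ 4d²N - 2d + 1 with n ≡ ℓ (mod 4d) for some odd ℓ with 2d+1 ≤ ℓ ≤ 4d-1, one has x_n = 0. -/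
theorem stmt_17 (d N : ℕ) (hd : 1 ≤ d) (hN : 2 ≤ N) (x : ℕ → ℕ)
    (hinit : ∀ i, 1 ≤ i → i ≤ N - 1 → x i ∈ ({0, 1, 2} : Set ℕ))
    (hrec : ∀ n, N ≤ n → x n = mex2 (x (n - 1)) (x ((n + (2 * d - 1)) / (2 * d)))) :
    ∀ n, 4 * d ^ 2 * N - 2 * d + 1 ≤ n →
      (∃ ℓ, Odd ℓ ∧ 2 * d + 1 ≤ ℓ ∧ ℓ ≤ 4 * d - 1 ∧ n % (4 * d) = ℓ) →
      x n = 0 := by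
  -- basic characterization of `mex2 _ _ = 0`
  have hmex0 : ∀ a b : ℕ, mex2 a b = 0 ↔ (a ≠ 0 ∧ b ≠ 0) := by
    intro a b
    unfold mex2
    split_ifs with h1 h2 h3
    · omega
    · exact iff_of_false (by simp) (by omega)
    · exact iff_of_false (by simp) (by omega)
    · exact iff_of_false (by simp) (by omega)
  -- ceiling-division computation
  have hceil : ∀ n k : ℕ, n ≤ 2*d*k → 2*d*k < n + 2*d → (n + (2 * d - 1)) / (2 * d) = k := by
    intro n k h1 h2
    have e1 : k * (2*d) = 2*d*k := by ring
    have e2 : (k+1) * (2*d) = 2*d*k + 2*d := by ring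
    exact Nat.div_eq_of_lt_le (by omega) (by omega)
  -- facts about j := ⌈N/(2d)⌉
  have hjmod : (N + (2*d-1)) % (2*d) < 2*d := Nat.mod_lt _ (by omega)
  have hj := Nat.div_add_mod (N + (2*d-1)) (2*d)
  have hj1 : N ≤ 2*d*((N + (2*d-1)) / (2*d)) := by omega
  have hj2 : (N + (2*d-1)) / (2*d) ≤ N := by
    by_contra hc
    push_neg at hc
    have h5 : 2*d*(N+1) ≤ 2*d*((N + (2*d-1)) / (2*d)) := Nat.mul_le_mul le_rfl (by omega)
    have h6 : 2*d*(N+1) = 2*d*N + 2*d := by ring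
    have h7 : 2*N ≤ 2*d*N := Nat.mul_le_mul (by omega) le_rfl
    omega
  have hj3 : 1 ≤ (N + (2*d-1)) / (2*d) := by
    rcases Nat.eq_zero_or_pos ((N + (2*d-1)) / (2*d)) with h|h
    · rw [h, Nat.mul_zero] at hj1; omega
    · exact h
  -- existence of a suitable zero m₀
  have hEx : ∃ m₀, x m₀ = 0 ∧ N ≤ 2*d*m₀ ∧ m₀ ≤ N ∧ 1 ≤ m₀ := by
    by_cases hxN : x N = 0
    · refine ⟨N, hxN, ?_, le_refl N, by omega⟩
      have h7 : 2*N ≤ 2*d*N := Nat.mul_le_mul (by omega) le_rfl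
      omega
    · have hN' := hrec N (le_refl N)
      by_cases hxj : x ((N + (2 * d - 1)) / (2 * d)) = 0
      · exact ⟨_, hxj, hj1, hj2, hj3⟩
      · have hxN1 : x (N-1) = 0 := by
          by_contra hcc
          exact hxN (hN' ▸ (hmex0 _ _).mpr ⟨hcc, hxj⟩)
        refine ⟨N-1, hxN1, ?_, by omega, by omega⟩
        have h8 : 2*(N-1) ≤ 2*d*(N-1) := Nat.mul_le_mul (by omega) le_rfl
        omega
  obtain ⟨m₀, hm0, hm1, hm2, hm3⟩ := hEx
  -- block alternation lemma
  have hblock : ∀ m, N ≤ 2*d*m + 1 → x (m+1) ≠ 0 → x (2*d*m) ≠ 0 → x (2*d*(m+1)) ≠ 0 := by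
    intro m hm hk h0
    have e : 2*d*(m+1) = 2*d*m + 2*d := by ring
    have key : ∀ t, 1 ≤ t → t ≤ 2*d → (x (2*d*m + t) = 0 ↔ t % 2 = 1) := by
      intro t
      induction t with
      | zero => intro h1 _; omega
      | succ t ih =>
        intro h1 h2
        have hrw := hrec (2*d*m + (t+1)) (by omega)
        have hc : (2*d*m + (t+1) + (2 * d - 1)) / (2 * d) = m+1 := by
          apply hceil <;> omega
        rw [hc] at hrw
        have hsub : 2*d*m + (t+1) - 1 = 2*d*m + t := by omega
        rw [hsub] at hrw
        rcases Nat.eq_zero_or_pos t with rfl|ht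
        · have h00 : x (2*d*m + 0) = x (2*d*m) := by norm_num
          rw [hrw, hmex0]
          omega
        · have ihh := ih (by omega) (by omega)
          rw [hrw, hmex0]
          omega
    have hk2 := key (2*d) (by omega) (le_refl _)
    rw [e]
    omega
  -- x (2*d*m) ≠ 0 for all m ≥ m₀
  have hZ : ∀ m, m₀ ≤ m → x (2*d*m) ≠ 0 := by
    intro m hm
    induction m, hm using Nat.le_induction with
    | base =>
      have hr := hrec (2*d*m₀) (by omega)
      have hc : (2*d*m₀ + (2 * d - 1)) / (2 * d) = m₀ := hceil _ _ (le_refl _) (by omega)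
      rw [hc, hm0] at hr
      intro hcon
      rw [hr, hmex0] at hcon
      omega
    | succ m hm ih =>
      have hmono : 2*d*m₀ ≤ 2*d*m := Nat.mul_le_mul le_rfl hm
      have e : 2*d*(m+1) = 2*d*m + 2*d := by ring
      by_cases hx : x (m+1) = 0
      · have hr := hrec (2*d*(m+1)) (by omega)
        have hc : (2*d*(m+1) + (2 * d - 1)) / (2 * d) = m+1 := hceil _ _ (le_refl _) (by omega)
        rw [hc, hx] at hr
        intro hcon
        rw [hr, hmex0] at hcon
        omega
      · exact hblock m (by omega) hx ih
  -- companion result: x n ≠ 0 for even n ≥ 2*d*m₀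
  have hC : ∀ n, n % 2 = 0 → 2*d*m₀ ≤ n → x n ≠ 0 := by
    intro n
    induction n using Nat.strong_induction_on with
    | _ n ih =>
      intro hev hge
      have hq := Nat.div_add_mod n (2*d)
      have hmodlt : n % (2*d) < 2*d := Nat.mod_lt _ (by omega)
      by_cases hdvd : n % (2*d) = 0
      · have hql : m₀ ≤ n / (2*d) := by
          by_contra hc
          push_neg at hc
          have h5 : 2*d*(n/(2*d)+1) ≤ 2*d*m₀ := Nat.mul_le_mul le_rfl (by omega)
          have e : 2*d*(n/(2*d)+1) = 2*d*(n/(2*d)) + 2*d := by ring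
          omega
        have hz := hZ (n/(2*d)) hql
        have e : 2*d*(n/(2*d)) = n := by omega
        rwa [e] at hz
      · -- n is strictly inside a block
        have heven2 : 2*(d*(n/(2*d))) = 2*d*(n/(2*d)) := by ring
        have hr2 : 2 ≤ n % (2*d) := by omega
        have hqm : m₀ ≤ n / (2*d) := by
          by_contra hc
          push_neg at hc
          have h5 : 2*d*(n/(2*d)+1) ≤ 2*d*m₀ := Nat.mul_le_mul le_rfl (by omega)
          have e : 2*d*(n/(2*d)+1) = 2*d*(n/(2*d)) + 2*d := by ring
          omega
        have hqmono : 2*d*m₀ ≤ 2*d*(n/(2*d)) := Nat.mul_le_mul le_rfl hqm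
        have e5 : 2*d*(n/(2*d)+1) = 2*d*(n/(2*d)) + 2*d := by ring
        have hr1 := hrec n (by omega)
        have hcn : (n + (2 * d - 1)) / (2 * d) = n/(2*d) + 1 := hceil _ _ (by omega) (by omega)
        rw [hcn] at hr1
        have hrm := hrec (n-1) (by omega)
        have hcn1 : (n - 1 + (2 * d - 1)) / (2 * d) = n/(2*d) + 1 := hceil _ _ (by omega) (by omega)
        rw [hcn1] at hrm
        have hsub : n - 1 - 1 = n - 2 := by omega
        rw [hsub] at hrm
        by_cases hxk : x (n/(2*d) + 1) = 0
        · rw [hxk] at hr1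
          intro hcon
          rw [hr1, hmex0] at hcon
          omega
        · have hx2 : x (n-2) ≠ 0 := ih (n-2) (by omega) (by omega) (by omega)
          have hz1 : x (n-1) = 0 := by
            rw [hrm, hmex0]; exact ⟨hx2, hxk⟩
          rw [hz1] at hr1
          intro hcon
          rw [hr1, hmex0] at hcon
          omega
  -- main argument
  intro n hn hl
  obtain ⟨ℓ, hodd, hl1, hl2, hl3⟩ := hl
  have hodd' : ℓ % 2 = 1 := Nat.odd_iff.mp hodd
  have hq4 := Nat.div_add_mod n (4*d)
  have hdN : 2*d*N + 2*d ≤ 4*d^2*N := by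
    have h1 : 4*d^2*N = 2*d*N*(2*d) := by ring
    have h2 : 2*d*N*2 ≤ 2*d*N*(2*d) := Nat.mul_le_mul le_rfl (by omega)
    have h4 : 2*d*N*2 = 2*d*N + 2*d*N := by ring
    have h3 : 2*d*2 ≤ 2*d*N := Nat.mul_le_mul le_rfl hN
    omega
  have h11 : 2*d*m₀ ≤ 2*d*N := Nat.mul_le_mul le_rfl hm2
  have e4 : 2*(2*d*(n/(4*d))) = 4*d*(n/(4*d)) := by ring
  have e5 : 2*d*(2*(n/(4*d)) + 2) = 4*d*(n/(4*d)) + 4*d := by ring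
  have hc1 : (n + (2 * d - 1)) / (2 * d) = 2*(n/(4*d)) + 2 := by
    apply hceil <;> omega
  have hrn := hrec n (by omega)
  rw [hc1] at hrn
  have hx1 : x (n-1) ≠ 0 := by
    apply hC
    · omega
    · omega
  have hk : x (2*(n/(4*d)) + 2) ≠ 0 := by
    apply hC
    · omega
    · have h9 : 4*d*(d*N) = 4*d^2*N := by ring
      have h10 : d*N ≤ n/(4*d) + 1 := by
        by_contra hc
        push_neg at hc
        have h12 : 4*d*(n/(4*d) + 2) ≤ 4*d*(d*N) := Nat.mul_le_mul le_rfl (by omega)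
        have e7 : 4*d*(n/(4*d) + 2) = 4*d*(n/(4*d)) + 8*d := by ring
        omega
      have h12 : 2*d*N = 2*(d*N) := by ring
      omega
  rw [hrn, hmex0]
  exact ⟨hx1, hk⟩
end
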